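/- Let Λ be a CPTP map with Λ[ρ] and Λ[ρ'] pure, and suppose tr_aux Λ gives outputs in the original space with partial traces. Then the deviation from faithfulness δ = η‖ρ − tr_aux Λ[ρ]‖_tr + η'‖ρ' − tr_aux Λ[ρ']‖_tr satisfies δ ≥ η (‖ρ − ρ'‖_tr − D(ρ,ρ')), where η ≤ η' are the a priori probabilities with η + η' = 1. -/

import Mathlib

open Matrix Kronecker BigOperators
open scoped ComplexOrder

/-- The positive semidefinite square root (as in the older Mathlib's `Matrix.PosSemidef.sqrt`). -/
noncomputable def Matrix.PosSemidef.sqrt {m 𝕜 : Type*} [Fintype m] [DecidableEq m] [RCLike 𝕜]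
    {A : Matrix m m 𝕜} (hA : A.PosSemidef) : Matrix m m 𝕜 :=
  hA.1.eigenvectorUnitary.1 * Matrix.diagonal ((↑) ∘ (fun x : ℝ => √x) ∘ hA.1.eigenvalues) *
    (star hA.1.eigenvectorUnitary : Matrix m m 𝕜)

/-- Trace distance/norm with factor 1/2: `‖A‖ = ½ tr √(AᴴA)`. -/
noncomputable def trNorm {m : Type*} [Fintype m] [DecidableEq m] (A : Matrix m m ℂ) : ℝ :=
  (1 / 2) * ((Matrix.posSemidef_conjTranspose_mul_self A).sqrt.trace).re

/-- A density operator: positive semidefinite with unit trace. -/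
def IsDensity {m : Type*} [Fintype m] (ρ : Matrix m m ℂ) : Prop :=
  ρ.PosSemidef ∧ ρ.trace = 1

/-- A pure state: a density operator that is a (rank-one) projector. -/
def IsPureState {m : Type*} [Fintype m] (ρ : Matrix m m ℂ) : Prop :=
  IsDensity ρ ∧ ρ * ρ = ρ

/-- Completely positive trace-preserving map, via a Kraus representation. -/
def IsCPTP {m p : Type*} [Fintype m] [DecidableEq m] [Fintype p]
    (Λ : Matrix m m ℂ →ₗ[ℂ] Matrix p p ℂ) : Prop :=
  ∃ (ι : Type) (s : Finset ι) (K : ι → Matrix p m ℂ),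
    (∀ ρ, Λ ρ = ∑ i ∈ s, K i * ρ * (K i)ᴴ) ∧ ∑ i ∈ s, (K i)ᴴ * K i = 1

/-- Partial trace over the second (auxiliary) tensor factor. -/
noncomputable def ptraceB {m b : Type*} [Fintype b] (ρ : Matrix (m × b) (m × b) ℂ) :
    Matrix m m ℂ :=
  Matrix.of fun i j => ∑ k : b, ρ (i, k) (j, k)

/-- The projector `|χ⟩⟨χ|` onto the vector `χ`. -/
noncomputable def pureProj {m : Type*} (χ : m → ℂ) : Matrix m m ℂ :=
  Matrix.vecMulVec χ (star χ)

/-- `χ` lies in the range of `ρ`. -/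
def inRange {m : Type*} [Fintype m] (ρ : Matrix m m ℂ) (χ : m → ℂ) : Prop :=
  ∃ v, ρ *ᵥ v = χ

/-- Worst-case distinguishability: infimum of trace distances of pure states
taken from the ranges of `ρ` and `ρ'`. -/
noncomputable def wcd {m : Type*} [Fintype m] [DecidableEq m] (ρ ρ' : Matrix m m ℂ) : ℝ :=
  sInf { d : ℝ | ∃ χ χ' : m → ℂ, inRange ρ χ ∧ inRange ρ' χ' ∧
    star χ ⬝ᵥ χ = 1 ∧ star χ' ⬝ᵥ χ' = 1 ∧ d = trNorm (pureProj χ - pureProj χ') }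

/-! ## Auxiliary machinery -/

set_option linter.unusedSectionVars false

section Aux

variable {m : Type*} [Fintype m] [DecidableEq m]

/-- Mini functional calculus for a Hermitian matrix. -/
noncomputable def hfc {X : Matrix m m ℂ} (hX : X.IsHermitian) (f : ℝ → ℝ) : Matrix m m ℂ :=
  (hX.eigenvectorUnitary : Matrix m m ℂ) *
    Matrix.diagonal (fun i => (f (hX.eigenvalues i) : ℂ)) *
    (star (hX.eigenvectorUnitary : Matrix m m ℂ))

lemma star_mul_self_eigU {X : Matrix m m ℂ} (hX : X.IsHermitian) :
    (star (hX.eigenvectorUnitary : Matrix m m ℂ)) * (hX.eigenvectorUnitary : Matrix m m ℂ) = 1 :=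
  hX.eigenvectorUnitary.2.1

lemma hfc_psd {X : Matrix m m ℂ} (hX : X.IsHermitian) {f : ℝ → ℝ} (hf : ∀ x, 0 ≤ f x) :
    (hfc hX f).PosSemidef := by
  have hd : (Matrix.diagonal (fun i => (f (hX.eigenvalues i) : ℂ))).PosSemidef :=
    Matrix.PosSemidef.diagonal (fun i => by
      simpa using Complex.zero_le_real.mpr (hf (hX.eigenvalues i)))
  simpa [hfc, Matrix.star_eq_conjTranspose] using
    hd.mul_mul_conjTranspose_same (hX.eigenvectorUnitary : Matrix m m ℂ)

lemma hfc_mul {X : Matrix m m ℂ} (hX : X.IsHermitian) (f g : ℝ → ℝ) :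
    hfc hX f * hfc hX g = hfc hX (f * g) := by
  simp only [hfc, Matrix.mul_assoc]
  rw [← Matrix.mul_assoc (star (hX.eigenvectorUnitary : Matrix m m ℂ)), star_mul_self_eigU,
    Matrix.one_mul, ← Matrix.mul_assoc (Matrix.diagonal _), Matrix.diagonal_mul_diagonal]
  congr 2
  funext i
  push_cast [Pi.mul_apply]
  ring

lemma hfc_sub {X : Matrix m m ℂ} (hX : X.IsHermitian) (f g : ℝ → ℝ) :
    hfc hX f - hfc hX g = hfc hX (f - g) := by
  simp only [hfc, ← Matrix.sub_mul, ← Matrix.mul_sub, Matrix.diagonal_sub]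
  congr 2
  funext i
  push_cast [Pi.sub_apply]
  ring

lemma hfc_id {X : Matrix m m ℂ} (hX : X.IsHermitian) : hfc hX id = X := by
  simpa [hfc, Function.comp_def] using hX.spectral_theorem.symm

lemma hfc_one {X : Matrix m m ℂ} (hX : X.IsHermitian) : hfc hX 1 = 1 := by
  simp only [hfc, Pi.one_apply, Complex.ofReal_one, Matrix.diagonal_one, Matrix.mul_one]
  exact hX.eigenvectorUnitary.2.2

lemma hfc_trace {X : Matrix m m ℂ} (hX : X.IsHermitian) (f : ℝ → ℝ) :
    (hfc hX f).trace = ((∑ i, f (hX.eigenvalues i) : ℝ) : ℂ) := by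
  rw [hfc, Matrix.trace_mul_cycle, star_mul_self_eigU, Matrix.one_mul, Matrix.trace_diagonal]
  push_cast
  rfl

lemma hfc_eigen_eq {X : Matrix m m ℂ} (hX : X.IsHermitian) {f g : ℝ → ℝ}
    (h : hfc hX f = hfc hX g) (i : m) : f (hX.eigenvalues i) = g (hX.eigenvalues i) := by
  have key : ∀ f : ℝ → ℝ, (star (hX.eigenvectorUnitary : Matrix m m ℂ)) * hfc hX f *
      (hX.eigenvectorUnitary : Matrix m m ℂ)
      = Matrix.diagonal (fun i => (f (hX.eigenvalues i) : ℂ)) := by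
    intro f
    rw [hfc]
    simp only [Matrix.mul_assoc]
    rw [star_mul_self_eigU, Matrix.mul_one, ← Matrix.mul_assoc, star_mul_self_eigU,
      Matrix.one_mul]
  have h2 : Matrix.diagonal (fun i => (f (hX.eigenvalues i) : ℂ))
      = Matrix.diagonal (fun i => (g (hX.eigenvalues i) : ℂ)) := by
    rw [← key f, ← key g, h]
  have h3 := congrFun (congrFun h2 i) i
  simpa [Matrix.diagonal_apply_eq, Complex.ofReal_inj] using h3

lemma hfc_congr {X : Matrix m m ℂ} (hX : X.IsHermitian) {f g : ℝ → ℝ}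
    (h : ∀ i, f (hX.eigenvalues i) = g (hX.eigenvalues i)) : hfc hX f = hfc hX g := by
  simp only [hfc, h]

lemma Matrix.PosSemidef.sqrt_eq_hfc {A : Matrix m m ℂ} (hA : A.PosSemidef) :
    hA.sqrt = hfc hA.1 Real.sqrt := rfl

lemma Matrix.PosSemidef.posSemidef_sqrt {A : Matrix m m ℂ} (hA : A.PosSemidef) :
    hA.sqrt.PosSemidef := by
  rw [hA.sqrt_eq_hfc]; exact hfc_psd hA.1 (fun x => Real.sqrt_nonneg x)

lemma Matrix.PosSemidef.sqrt_mul_self {A : Matrix m m ℂ} (hA : A.PosSemidef) :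
    hA.sqrt * hA.sqrt = A := by
  rw [hA.sqrt_eq_hfc, hfc_mul]
  conv_rhs => rw [← hfc_id hA.1]
  exact hfc_congr hA.1 (fun i => Real.mul_self_sqrt (hA.eigenvalues_nonneg i))

open scoped MatrixOrder in
lemma Matrix.PosSemidef.sqrt_eq_cfc {A : Matrix m m ℂ} (hA : A.PosSemidef) :
    hA.sqrt = CFC.sqrt A := by
  rw [CFC.sqrt_eq_real_sqrt A hA.nonneg, cfcₙ_eq_cfc, hA.1.cfc_eq, Matrix.IsHermitian.cfc,
    Unitary.conjStarAlgAut_apply]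
  rfl

open scoped MatrixOrder in
lemma Matrix.PosSemidef.eq_sqrt_of_sq_eq {A B : Matrix m m ℂ} (hA : A.PosSemidef)
    (hB : B.PosSemidef) (hAB : A ^ 2 = B) : A = hB.sqrt := by
  rw [hB.sqrt_eq_cfc]
  exact (CFC.sqrt_unique (by rw [← pow_two]; exact hAB) hA.nonneg).symm

/-! ### Trace norm -/

lemma trace_re_nonneg {A : Matrix m m ℂ} (hA : A.PosSemidef) : 0 ≤ A.trace.re := by
  have h : ∀ i, 0 ≤ (A i i).re := fun i => by
    have := hA.re_dotProduct_nonneg (Pi.single i 1)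
    simpa [Matrix.mulVec, dotProduct, Pi.single_apply] using this
  simpa [Matrix.trace, Matrix.diag, Complex.re_sum] using Finset.sum_nonneg fun i _ => h i

lemma trNorm_nonneg (A : Matrix m m ℂ) : 0 ≤ trNorm A := by
  have := trace_re_nonneg (Matrix.posSemidef_conjTranspose_mul_self A).posSemidef_sqrt
  unfold trNorm; linarith

lemma sqrt_congr {A B : Matrix m m ℂ} (hA : A.PosSemidef) (hB : B.PosSemidef) (h : A = B) :
    hA.sqrt = hB.sqrt := by subst h; rfl

lemma trNorm_eq_of {A B : Matrix m m ℂ} (h : Aᴴ * A = Bᴴ * B) : trNorm A = trNorm B := by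
  unfold trNorm
  rw [sqrt_congr (Matrix.posSemidef_conjTranspose_mul_self A)
    (Matrix.posSemidef_conjTranspose_mul_self B) h]

lemma trNorm_neg (A : Matrix m m ℂ) : trNorm (-A) = trNorm A :=
  trNorm_eq_of (by simp)

lemma sqrt_herm {X : Matrix m m ℂ} (hX : X.IsHermitian) :
    (Matrix.posSemidef_conjTranspose_mul_self X).sqrt = hfc hX (fun x => |x|) := by
  refine ((hfc_psd hX (fun x => abs_nonneg x)).eq_sqrt_of_sq_eq _ ?_).symm
  rw [pow_two, hfc_mul]
  have h1 : (fun x : ℝ => |x|) * (fun x : ℝ => |x|) = id * id := by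
    funext x; simp [← pow_two, sq_abs]
  rw [h1, ← hfc_mul, hfc_id, Matrix.IsHermitian.eq hX]

lemma trNorm_herm {X : Matrix m m ℂ} (hX : X.IsHermitian) :
    trNorm X = (1 / 2) * ∑ i, |hX.eigenvalues i| := by
  unfold trNorm
  rw [sqrt_herm hX, hfc_trace]
  simp

lemma trNorm_psd {A : Matrix m m ℂ} (hA : A.PosSemidef) : trNorm A = (1 / 2) * A.trace.re := by
  rw [trNorm_herm hA.isHermitian]
  have ht : A.trace = ((∑ i, hA.isHermitian.eigenvalues i : ℝ) : ℂ) := by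
    have h := hfc_trace hA.isHermitian id
    rwa [hfc_id] at h
  rw [ht]
  simp only [Complex.ofReal_re]
  congr 1
  exact Finset.sum_congr rfl fun i _ => abs_of_nonneg (hA.eigenvalues_nonneg i)

lemma trace_mul_psd_re_nonneg {A B : Matrix m m ℂ} (hA : A.PosSemidef) (hB : B.PosSemidef) :
    0 ≤ (A * B).trace.re := by
  have h1 : A * B = hA.sqrt * (hA.sqrt * B) := by
    rw [← Matrix.mul_assoc, hA.sqrt_mul_self]
  rw [h1, Matrix.trace_mul_comm]
  have h3 : (hA.sqrt * B * hA.sqrt).PosSemidef := by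
    have := hB.mul_mul_conjTranspose_same hA.sqrt
    rwa [hA.posSemidef_sqrt.isHermitian.eq] at this
  exact trace_re_nonneg h3

noncomputable def posP {X : Matrix m m ℂ} (hX : X.IsHermitian) : Matrix m m ℂ :=
  hfc hX (fun x => max x 0)
noncomputable def negP {X : Matrix m m ℂ} (hX : X.IsHermitian) : Matrix m m ℂ :=
  hfc hX (fun x => max x 0 - x)

lemma posP_psd {X : Matrix m m ℂ} (hX : X.IsHermitian) : (posP hX).PosSemidef :=
  hfc_psd hX (fun x => le_max_right x 0)
lemma negP_psd {X : Matrix m m ℂ} (hX : X.IsHermitian) : (negP hX).PosSemidef :=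
  hfc_psd hX (fun x => by simp [sub_nonneg, le_max_left])

lemma posP_sub_negP {X : Matrix m m ℂ} (hX : X.IsHermitian) : posP hX - negP hX = X := by
  rw [posP, negP, hfc_sub]
  have : ((fun x => max x 0) - fun x => max x 0 - x) = (id : ℝ → ℝ) := by
    funext x; simp
  rw [this, hfc_id]

lemma trace_posP_add_negP {X : Matrix m m ℂ} (hX : X.IsHermitian) :
    (posP hX).trace.re + (negP hX).trace.re = 2 * trNorm X := by
  rw [posP, negP, hfc_trace, hfc_trace, trNorm_herm hX]
  simp only [Complex.ofReal_re]
  rw [← Finset.sum_add_distrib]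
  have : ∀ x : ℝ, max x 0 + (max x 0 - x) = |x| := by
    intro x
    rcases le_total x 0 with h | h
    · rw [max_eq_right h, abs_of_nonpos h]; ring
    · rw [max_eq_left h, abs_of_nonneg h]; ring
  simp only [this]
  ring

lemma trNorm_le_of_decomp {X A B : Matrix m m ℂ} (hX : X.IsHermitian)
    (hA : A.PosSemidef) (hB : B.PosSemidef) (h : X = A - B) :
    trNorm X ≤ (1 / 2) * (A.trace.re + B.trace.re) := by
  set q : ℝ → ℝ := fun x => if 0 ≤ x then 1 else 0 with hq
  have hQ : (hfc hX q).PosSemidef := hfc_psd hX (fun x => by by_cases hx : 0 ≤ x <;> simp [hq, hx])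
  have hQ' : (hfc hX (1 - q)).PosSemidef :=
    hfc_psd hX (fun x => by by_cases hx : 0 ≤ x <;> simp [hq, hx])
  have hQ1 : hfc hX (1 - q) = 1 - hfc hX q := by rw [← hfc_sub, hfc_one]
  have hPX : posP hX = hfc hX q * X := by
    have h0 : hfc hX q * hfc hX id = hfc hX (q * id) := hfc_mul hX q id
    rw [hfc_id] at h0
    have hfun : (fun x : ℝ => max x 0) = q * id := by
      funext x
      by_cases hx : 0 ≤ x
      · simp [hq, hx, max_eq_left hx]
      · simp [hq, hx, max_eq_right (le_of_not_ge hx)]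
    rw [h0, posP, hfun]
  have e1 : (posP hX).trace = (hfc hX q * A).trace - (hfc hX q * B).trace := by
    have hx : hfc hX q * X = hfc hX q * A - hfc hX q * B := by rw [← mul_sub, ← h]
    rw [hPX, hx, Matrix.trace_sub]
  have e2 : (negP hX).trace = (posP hX).trace - X.trace := by
    have hx : negP hX = posP hX - X := by
      rw [eq_sub_iff_add_eq, add_comm]
      exact (sub_eq_iff_eq_add.mp (posP_sub_negP hX)).symm
    rw [hx, Matrix.trace_sub]
  have e3 : X.trace = A.trace - B.trace := by rw [h, Matrix.trace_sub]
  have e4 : (hfc hX (1 - q) * A).trace = A.trace - (hfc hX q * A).trace := by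
    rw [hQ1, sub_mul, one_mul, Matrix.trace_sub]
  have e5 : (hfc hX (1 - q) * B).trace = B.trace - (hfc hX q * B).trace := by
    rw [hQ1, sub_mul, one_mul, Matrix.trace_sub]
  have n1 : 0 ≤ (hfc hX q * B).trace.re := trace_mul_psd_re_nonneg hQ hB
  have n2 : 0 ≤ (hfc hX q * A).trace.re := trace_mul_psd_re_nonneg hQ hA
  have n3 : 0 ≤ (hfc hX (1 - q) * A).trace.re := trace_mul_psd_re_nonneg hQ' hA
  have n4 : 0 ≤ (hfc hX (1 - q) * B).trace.re := trace_mul_psd_re_nonneg hQ' hB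
  have key := trace_posP_add_negP hX
  have r1 := congrArg Complex.re e1
  have r2 := congrArg Complex.re e2
  have r3 := congrArg Complex.re e3
  have r4 := congrArg Complex.re e4
  have r5 := congrArg Complex.re e5
  simp only [Complex.sub_re] at r1 r2 r3 r4 r5
  linarith

lemma trNorm_triangle {X Y : Matrix m m ℂ} (hX : X.IsHermitian) (hY : Y.IsHermitian) :
    trNorm (X + Y) ≤ trNorm X + trNorm Y := by
  have hdec : X + Y = (posP hX + posP hY) - (negP hX + negP hY) := by
    have h3 : (posP hX - negP hX) + (posP hY - negP hY)
        = (posP hX + posP hY) - (negP hX + negP hY) := by abel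
    rw [← h3, posP_sub_negP, posP_sub_negP]
  have h := trNorm_le_of_decomp (hX.add hY) ((posP_psd hX).add (posP_psd hY))
    ((negP_psd hX).add (negP_psd hY)) hdec
  have k1 := trace_posP_add_negP hX
  have k2 := trace_posP_add_negP hY
  simp only [Matrix.trace_add, Complex.add_re] at h
  linarith

/-- Contractivity of positive trace-preserving sub-additive maps on Hermitian matrices. -/
lemma trNorm_contract {p : Type*} [Fintype p] [DecidableEq p]
    {X : Matrix m m ℂ} (hX : X.IsHermitian) (Φ : Matrix m m ℂ → Matrix p p ℂ)
    (hsub : ∀ A B, Φ (A - B) = Φ A - Φ B)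
    (hpos : ∀ A, A.PosSemidef → (Φ A).PosSemidef)
    (htr : ∀ A, A.PosSemidef → (Φ A).trace = A.trace) :
    trNorm (Φ X) ≤ trNorm X := by
  have hdec : Φ X = Φ (posP hX) - Φ (negP hX) := by
    rw [← hsub, posP_sub_negP]
  have hP := hpos _ (posP_psd hX)
  have hN := hpos _ (negP_psd hX)
  have hH : (Φ X).IsHermitian := by rw [hdec]; exact hP.isHermitian.sub hN.isHermitian
  have h := trNorm_le_of_decomp hH hP hN hdec
  rw [htr _ (posP_psd hX), htr _ (negP_psd hX)] at h
  have key := trace_posP_add_negP hX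
  linarith

/-! ### pureProj basics -/

lemma vecMulVec_mulVec' (a b w : m → ℂ) :
    Matrix.vecMulVec a b *ᵥ w = (b ⬝ᵥ w) • a := by
  funext i
  simp only [Matrix.mulVec, Matrix.vecMulVec_apply, dotProduct, Pi.smul_apply, smul_eq_mul]
  rw [Finset.sum_mul]
  congr 1; funext j; ring

lemma pureProj_mulVec (u w : m → ℂ) : pureProj u *ᵥ w = (star u ⬝ᵥ w) • u := by
  funext i
  simp only [pureProj, Matrix.mulVec, Matrix.vecMulVec_apply, dotProduct, Pi.smul_apply,
    smul_eq_mul, Pi.star_apply]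
  rw [Finset.sum_mul]
  congr 1; funext j; ring

lemma dot_pureProj (u w : m → ℂ) :
    star w ⬝ᵥ (pureProj u *ᵥ w) = star (star u ⬝ᵥ w) * (star u ⬝ᵥ w) := by
  rw [pureProj_mulVec, dotProduct_smul]
  have : star w ⬝ᵥ u = star (star u ⬝ᵥ w) := by
    simp only [dotProduct, star_sum, Pi.star_apply, star_mul', star_star]
    congr 1; funext j; ring
  rw [smul_eq_mul, this]; ring

lemma pureProj_psd (u : m → ℂ) : (pureProj u).PosSemidef := by
  refine Matrix.PosSemidef.of_dotProduct_mulVec_nonneg ?_ ?_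
  · ext i j
    simp only [Matrix.conjTranspose_apply, pureProj, Matrix.vecMulVec_apply, Pi.star_apply,
      star_mul', star_star]
    ring
  · intro w
    rw [dot_pureProj]
    exact star_mul_self_nonneg _

lemma pureProj_trace (u : m → ℂ) : (pureProj u).trace = star u ⬝ᵥ u := by
  simp only [Matrix.trace, Matrix.diag, pureProj, Matrix.vecMulVec_apply, dotProduct, Pi.star_apply]
  congr 1; funext j; ring

/-! ### CPTP maps -/

lemma psd_sum {p : Type*} [Fintype p] {ι : Type*} (s : Finset ι) (f : ι → Matrix p p ℂ)
    (h : ∀ i ∈ s, (f i).PosSemidef) : (∑ i ∈ s, f i).PosSemidef := by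
  classical
  induction s using Finset.induction with
  | empty => simpa using Matrix.PosSemidef.zero
  | insert _ _ hni ih =>
    rw [Finset.sum_insert hni]
    exact (h _ (Finset.mem_insert_self _ _)).add
      (ih fun i hi => h i (Finset.mem_insert_of_mem hi))

lemma cptp_psd {p : Type*} [Fintype p] {Λ : Matrix m m ℂ →ₗ[ℂ] Matrix p p ℂ}
    (hΛ : IsCPTP Λ) {A : Matrix m m ℂ} (hA : A.PosSemidef) : (Λ A).PosSemidef := by
  obtain ⟨ι, s, K, hK, -⟩ := hΛ
  rw [hK]
  exact psd_sum s _ fun i _ => hA.mul_mul_conjTranspose_same _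

lemma cptp_trace {p : Type*} [Fintype p] {Λ : Matrix m m ℂ →ₗ[ℂ] Matrix p p ℂ}
    (hΛ : IsCPTP Λ) (A : Matrix m m ℂ) : (Λ A).trace = A.trace := by
  obtain ⟨ι, s, K, hK, hTP⟩ := hΛ
  rw [hK, Matrix.trace_sum]
  have : ∀ i ∈ s, (K i * A * (K i)ᴴ).trace = ((K i)ᴴ * K i * A).trace := fun i _ => by
    rw [Matrix.trace_mul_cycle]
  rw [Finset.sum_congr rfl this, ← Matrix.trace_sum, ← Finset.sum_mul, hTP, Matrix.one_mul]

/-! ### partial trace -/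

lemma ptraceB_sub {b : Type*} [Fintype b] (X Y : Matrix (m × b) (m × b) ℂ) :
    ptraceB (X - Y) = ptraceB X - ptraceB Y := by
  ext i j
  simp [ptraceB, Finset.sum_sub_distrib]

lemma ptraceB_trace {b : Type*} [Fintype b] (X : Matrix (m × b) (m × b) ℂ) :
    (ptraceB X).trace = X.trace := by
  simp only [Matrix.trace, Matrix.diag, ptraceB, Matrix.of_apply]
  rw [← Finset.sum_product']
  rfl

open scoped MatrixOrder in
lemma ptraceB_psd {b : Type*} [Fintype b] {X : Matrix (m × b) (m × b) ℂ}
    (hX : X.PosSemidef) : (ptraceB X).PosSemidef := by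
  classical
  obtain ⟨B, rfl⟩ := CStarAlgebra.nonneg_iff_eq_star_mul_self.mp hX.nonneg
  have key : ptraceB (Bᴴ * B) = ∑ k : b,
      (Matrix.of fun q (i : m) => B q (i, k))ᴴ * (Matrix.of fun q i => B q (i, k)) := by
    ext i j
    simp only [ptraceB, Matrix.of_apply, Matrix.sum_apply, Matrix.mul_apply,
      Matrix.conjTranspose_apply]
    try rw [Finset.sum_comm]
  rw [Matrix.star_eq_conjTranspose, key]
  exact psd_sum _ _ fun k _ => Matrix.posSemidef_conjTranspose_mul_self _

/-! ### Cauchy–Schwarz -/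

lemma cs_psd {ρ : Matrix m m ℂ} (hρ : ρ.PosSemidef) (v : m → ℂ) :
    ((star v ⬝ᵥ (ρ *ᵥ v)) • ρ - pureProj (ρ *ᵥ v)).PosSemidef := by
  have hSH : hρ.sqrt.conjTranspose = hρ.sqrt := hρ.posSemidef_sqrt.isHermitian
  have key : ∀ x y : m → ℂ,
      star x ⬝ᵥ (ρ *ᵥ y) = star (hρ.sqrt *ᵥ x) ⬝ᵥ (hρ.sqrt *ᵥ y) := by
    intro x y
    rw [star_mulVec, hSH, ← Matrix.dotProduct_mulVec, Matrix.mulVec_mulVec, hρ.sqrt_mul_self]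
  have hc : star (star v ⬝ᵥ (ρ *ᵥ v)) = star v ⬝ᵥ (ρ *ᵥ v) := by
    have h0 := hρ.dotProduct_mulVec_nonneg v
    rw [Complex.nonneg_iff] at h0
    rw [Complex.star_def, Complex.conj_eq_iff_im]
    exact h0.2.symm
  refine Matrix.PosSemidef.of_dotProduct_mulVec_nonneg ?_ ?_
  · rw [Matrix.IsHermitian, Matrix.conjTranspose_sub, Matrix.conjTranspose_smul, hc,
      hρ.isHermitian.eq, (pureProj_psd (ρ *ᵥ v)).isHermitian.eq]
  · intro w
    have hform : star w ⬝ᵥ (((star v ⬝ᵥ (ρ *ᵥ v)) • ρ - pureProj (ρ *ᵥ v)) *ᵥ w)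
        = (star v ⬝ᵥ (ρ *ᵥ v)) * (star w ⬝ᵥ (ρ *ᵥ w))
          - star (star (ρ *ᵥ v) ⬝ᵥ w) * (star (ρ *ᵥ v) ⬝ᵥ w) := by
      rw [Matrix.sub_mulVec, dotProduct_sub, Matrix.smul_mulVec, dotProduct_smul,
        dot_pureProj]
      simp only [smul_eq_mul]
      try ring
    rw [hform]
    have hz : star (ρ *ᵥ v) ⬝ᵥ w = star (hρ.sqrt *ᵥ v) ⬝ᵥ (hρ.sqrt *ᵥ w) := by
      have : star (ρ *ᵥ v) ⬝ᵥ w = star (star w ⬝ᵥ (ρ *ᵥ v)) := by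
        simp only [dotProduct, star_sum, Pi.star_apply, star_mul', star_star]
        congr 1; funext j; ring
      rw [this, key w v]
      simp only [dotProduct, star_sum, Pi.star_apply, star_mul', star_star]
      congr 1; funext j; ring
    rw [key v v, key w w, hz]
    set α : EuclideanSpace ℂ m := (WithLp.equiv 2 (m → ℂ)).symm (hρ.sqrt *ᵥ v) with hα
    set β : EuclideanSpace ℂ m := (WithLp.equiv 2 (m → ℂ)).symm (hρ.sqrt *ᵥ w) with hβ
    have e1 : star (hρ.sqrt *ᵥ v) ⬝ᵥ (hρ.sqrt *ᵥ v) = (inner ℂ α α : ℂ) := by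
      rw [EuclideanSpace.inner_eq_star_dotProduct]; exact dotProduct_comm _ _
    have e2 : star (hρ.sqrt *ᵥ w) ⬝ᵥ (hρ.sqrt *ᵥ w) = (inner ℂ β β : ℂ) := by
      rw [EuclideanSpace.inner_eq_star_dotProduct]; exact dotProduct_comm _ _
    have e3 : star (hρ.sqrt *ᵥ v) ⬝ᵥ (hρ.sqrt *ᵥ w) = (inner ℂ α β : ℂ) := by
      rw [EuclideanSpace.inner_eq_star_dotProduct]; exact dotProduct_comm _ _
    rw [e1, e2, e3]
    rw [inner_self_eq_norm_sq_to_K, inner_self_eq_norm_sq_to_K]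
    have e4 : star (inner ℂ α β : ℂ) * (inner ℂ α β : ℂ) = ((‖(inner ℂ α β : ℂ)‖ ^ 2 : ℝ) : ℂ) := by
      rw [Complex.star_def, ← Complex.normSq_eq_conj_mul_self, Complex.normSq_eq_norm_sq]
    rw [e4]
    have hcs := norm_inner_le_norm (𝕜 := ℂ) α β
    have h5 : ‖(inner ℂ α β : ℂ)‖ ^ 2 ≤ ‖α‖ ^ 2 * ‖β‖ ^ 2 := by
      rw [← mul_pow]
      exact pow_le_pow_left₀ (norm_nonneg _) hcs 2
    have h6 : (0:ℂ) ≤ ((‖α‖ ^ 2 * ‖β‖ ^ 2 - ‖(inner ℂ α β : ℂ)‖ ^ 2 : ℝ) : ℂ) := by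
      rw [Complex.zero_le_real]; linarith
    refine le_of_le_of_eq h6 ?_
    push_cast [RCLike.ofReal_pow]
    norm_num
    try ring

/-! ### Structure of pure states -/

lemma pure_exists_vec {P : Matrix m m ℂ} (hP : IsPureState P) :
    ∃ u : m → ℂ, P = pureProj u ∧ star u ⬝ᵥ u = 1 := by
  obtain ⟨⟨hpsd, htr⟩, hidem⟩ := hP
  have hH : P.IsHermitian := hpsd.isHermitian
  have hsq : hfc hH (id * id) = hfc hH id := by
    rw [← hfc_mul, hfc_id, hidem]
  have h01 : ∀ i, hH.eigenvalues i = 0 ∨ hH.eigenvalues i = 1 := by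
    intro i
    have h := hfc_eigen_eq hH hsq i
    simp only [Pi.mul_apply, id] at h
    have h2 : hH.eigenvalues i * (hH.eigenvalues i - 1) = 0 := by nlinarith
    rcases mul_eq_zero.mp h2 with h3 | h3
    · exact Or.inl h3
    · exact Or.inr (by linarith)
  have hsum : ∑ i, hH.eigenvalues i = 1 := by
    have h1 := hfc_trace hH id
    rw [hfc_id] at h1
    simp only [id_eq] at h1
    have h2 : ((∑ i, hH.eigenvalues i : ℝ) : ℂ) = 1 := by
      rw [← h1]; exact htr
    exact_mod_cast h2
  set s := Finset.univ.filter (fun i => hH.eigenvalues i = 1) with hs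
  have hcard : (s.card : ℝ) = 1 := by
    rw [← hsum]
    have hcongr : ∀ i ∈ Finset.univ, hH.eigenvalues i
        = if hH.eigenvalues i = 1 then (1:ℝ) else 0 := by
      intro i _
      rcases h01 i with h | h <;> simp [h]
    rw [Finset.sum_congr rfl hcongr, Finset.sum_boole]
  have hcard1 : s.card = 1 := by exact_mod_cast hcard
  obtain ⟨i₀, hi₀⟩ := Finset.card_eq_one.mp hcard1
  have hlam : ∀ i, hH.eigenvalues i = if i = i₀ then 1 else 0 := by
    intro i
    by_cases h : i = i₀
    · subst h
      have hmem : i ∈ s := hi₀ ▸ Finset.mem_singleton_self i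
      rw [hs] at hmem
      simp only [Finset.mem_filter, Finset.mem_univ, true_and] at hmem
      simp [hmem]
    · have hmem : i ∉ s := by rw [hi₀]; simp [h]
      rw [hs] at hmem
      simp only [Finset.mem_filter, Finset.mem_univ, true_and] at hmem
      rcases h01 i with h0 | h1
      · simp [h, h0]
      · exact absurd h1 hmem
  refine ⟨fun j => (hH.eigenvectorUnitary : Matrix m m ℂ) j i₀, ?_, ?_⟩
  · have hPid := hfc_id hH
    refine Eq.trans hPid.symm ?_
    rw [hfc]
    ext j k
    rw [Matrix.mul_apply]
    simp only [Matrix.mul_diagonal, Matrix.star_apply, pureProj, Matrix.vecMulVec_apply,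
      Pi.star_apply, id]
    rw [Finset.sum_eq_single i₀]
    · rw [hlam i₀]; simp
    · intro q _ hq; rw [hlam q]; simp [hq]
    · intro h; exact absurd (Finset.mem_univ i₀) h
  · have h1 := congrFun (congrFun (star_mul_self_eigU hH) i₀) i₀
    simp only [Matrix.mul_apply, Matrix.star_apply, Matrix.one_apply_eq] at h1
    simpa [dotProduct, Pi.star_apply] using h1

lemma psd_eq_proj {M : Matrix m m ℂ} (hM : M.PosSemidef) (htr : M.trace = 1)
    (u : m → ℂ) (hu : star u ⬝ᵥ u = 1) (c : ℂ)
    (hle : (c • pureProj u - M).PosSemidef) : M = pureProj u := by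
  have hker : ∀ w, star u ⬝ᵥ w = 0 → M *ᵥ w = 0 := by
    intro w hw
    have h1 := hle.dotProduct_mulVec_nonneg w
    have h2 : star w ⬝ᵥ ((c • pureProj u - M) *ᵥ w) = - (star w ⬝ᵥ (M *ᵥ w)) := by
      rw [Matrix.sub_mulVec, dotProduct_sub, Matrix.smul_mulVec, dotProduct_smul,
        dot_pureProj, hw]
      simp
    rw [h2] at h1
    have h3 := hM.dotProduct_mulVec_nonneg w
    have h4 : star w ⬝ᵥ (M *ᵥ w) = 0 := le_antisymm (neg_nonneg.mp h1) h3
    exact (hM.dotProduct_mulVec_zero_iff w).mp h4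
  have hrep : ∀ w, M *ᵥ w = (star u ⬝ᵥ w) • (M *ᵥ u) := by
    intro w
    have h0 : star u ⬝ᵥ (w - (star u ⬝ᵥ w) • u) = 0 := by
      rw [dotProduct_sub, dotProduct_smul, hu]
      simp [smul_eq_mul]
    have h1 := hker _ h0
    rw [Matrix.mulVec_sub, Matrix.mulVec_smul, sub_eq_zero] at h1
    exact h1
  have hcol : M = Matrix.vecMulVec (M *ᵥ u) (star u) := by
    ext j k
    have h := congrFun (hrep (Pi.single k 1)) j
    simp only [Matrix.mulVec_single_one, Matrix.col_apply, mul_one, Pi.smul_apply, smul_eq_mul,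
      dotProduct_single, Matrix.vecMulVec_apply, Pi.star_apply] at h ⊢
    rw [h]; ring
  have hgen : ∀ a : m → ℂ, (Matrix.vecMulVec a (star u))ᴴ = Matrix.vecMulVec u (star a) := by
    intro a
    ext j k
    simp only [Matrix.conjTranspose_apply, Matrix.vecMulVec_apply, Pi.star_apply, star_mul',
      star_star]
    ring
  have hcol2 : M = Matrix.vecMulVec u (star (M *ᵥ u)) := by
    have h2 := congrArg Matrix.conjTranspose hcol
    rw [hM.isHermitian.eq, hgen] at h2
    exact h2
  have hMu : M *ᵥ u = (star (M *ᵥ u) ⬝ᵥ u) • u := by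
    conv_lhs => rw [hcol2, vecMulVec_mulVec']
  have hMt : M = (star (M *ᵥ u) ⬝ᵥ u) • pureProj u := by
    conv_lhs => rw [hcol, hMu]
    ext j k
    simp only [Matrix.vecMulVec_apply, pureProj, Pi.smul_apply, Pi.star_apply, smul_eq_mul,
      Matrix.smul_apply]
    ring
  have htt : (star (M *ᵥ u) ⬝ᵥ u) = 1 := by
    have h := congrArg Matrix.trace hMt
    rw [htr, Matrix.trace_smul, pureProj_trace, hu, smul_eq_mul, mul_one] at h
    exact h.symm
  rw [hMt, htt, one_smul]

/-! ### Purity transfer -/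

lemma purity {p : Type*} [Fintype p] {Λ : Matrix m m ℂ →ₗ[ℂ] Matrix p p ℂ}
    (hΛ : IsCPTP Λ) {ρ : Matrix m m ℂ} (hρ : IsDensity ρ) (hp : IsPureState (Λ ρ))
    {χ : m → ℂ} (hχ : inRange ρ χ) (hunit : star χ ⬝ᵥ χ = 1) :
    Λ (pureProj χ) = Λ ρ := by
  classical
  obtain ⟨v, rfl⟩ := hχ
  obtain ⟨u, hu, huu⟩ := pure_exists_vec hp
  have hcs := cs_psd hρ.1 v
  have hpos := cptp_psd hΛ hcs
  rw [map_sub, Λ.map_smul] at hpos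
  rw [hu] at hpos
  have hM := cptp_psd hΛ (pureProj_psd (ρ *ᵥ v))
  have htrM : (Λ (pureProj (ρ *ᵥ v))).trace = 1 := by
    rw [cptp_trace hΛ, pureProj_trace, hunit]
  rw [psd_eq_proj hM htrM u huu _ hpos, hu]

/-! ### A unit vector in the range of a density matrix -/

lemma exists_unit_inRange {ρ : Matrix m m ℂ} (hρ : IsDensity ρ) :
    ∃ χ : m → ℂ, inRange ρ χ ∧ star χ ⬝ᵥ χ = 1 := by
  have hne : ∃ i, ρ i i ≠ 0 := by
    by_contra h
    push_neg at h
    have h0 : ρ.trace = 0 := by simp [Matrix.trace, Matrix.diag, h]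
    rw [hρ.2] at h0
    exact one_ne_zero h0
  obtain ⟨i, hi⟩ := hne
  set w : m → ℂ := ρ *ᵥ Pi.single i 1 with hw
  have hwi : w i = ρ i i := by simp [hw, Matrix.mulVec_single]
  set R : ℝ := ∑ j, Complex.normSq (w j) with hR
  have hRpos : 0 < R := by
    apply Finset.sum_pos' (fun j _ => Complex.normSq_nonneg _)
    exact ⟨i, Finset.mem_univ i, Complex.normSq_pos.mpr (by rw [hwi]; exact hi)⟩
  have hdot : star w ⬝ᵥ w = (R : ℂ) := by
    have hcast : (R : ℂ) = ∑ j, ((Complex.normSq (w j) : ℝ) : ℂ) := by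
      rw [hR]; push_cast; rfl
    rw [hcast]
    simp only [dotProduct, Pi.star_apply, Complex.star_def]
    congr 1; funext j
    exact (Complex.normSq_eq_conj_mul_self).symm
  set s : ℂ := (((Real.sqrt R)⁻¹ : ℝ) : ℂ) with hs
  refine ⟨s • w, ⟨s • (Pi.single i 1 : m → ℂ), ?_⟩, ?_⟩
  · rw [Matrix.mulVec_smul, ← hw]
  · rw [star_smul, smul_dotProduct, dotProduct_smul, hdot]
    have hstars : star s = s := by rw [hs, Complex.star_def, Complex.conj_ofReal]
    rw [hstars, hs, smul_eq_mul, smul_eq_mul]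
    have hsne : Real.sqrt R ≠ 0 := ne_of_gt (Real.sqrt_pos.mpr hRpos)
    have hmul : Real.sqrt R * Real.sqrt R = R := Real.mul_self_sqrt hRpos.le
    have : ((Real.sqrt R)⁻¹ * ((Real.sqrt R)⁻¹ * R) : ℝ) = 1 := by
      field_simp
      rw [sq, hmul]
    calc (((Real.sqrt R)⁻¹ : ℝ) : ℂ) * ((((Real.sqrt R)⁻¹ : ℝ) : ℂ) * (R:ℂ))
        = (((Real.sqrt R)⁻¹ * ((Real.sqrt R)⁻¹ * R) : ℝ) : ℂ) := by push_cast; ring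
      _ = 1 := by rw [this]; norm_num

end Aux

/-- lower bound on the deviation from perfect faithfulness of a
two-state purifier with pure output:
`δ ≥ η (‖ρ − ρ'‖_tr − D(ρ,ρ'))`. -/
theorem faithfulness_lower_bound {n a : Type*} [Fintype n] [DecidableEq n] [Fintype a]
    (Λ : Matrix n n ℂ →ₗ[ℂ] Matrix (n × a) (n × a) ℂ) (hCPTP : IsCPTP Λ)
    (ρ ρ' : Matrix n n ℂ) (hρ : IsDensity ρ) (hρ' : IsDensity ρ')
    (hp : IsPureState (Λ ρ)) (hp' : IsPureState (Λ ρ'))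
    (η η' : ℝ) (hη : 0 ≤ η) (hle : η ≤ η') (hsum : η + η' = 1) :
    η * (trNorm (ρ - ρ') - wcd ρ ρ')
      ≤ η * trNorm (ρ - ptraceB (Λ ρ)) + η' * trNorm (ρ' - ptraceB (Λ ρ')) := by
  classical
  have hΦsub : ∀ A B : Matrix n n ℂ, ptraceB (Λ (A - B)) = ptraceB (Λ A) - ptraceB (Λ B) := by
    intro A B; rw [map_sub, ptraceB_sub]
  have hΦpos : ∀ A : Matrix n n ℂ, A.PosSemidef → (ptraceB (Λ A)).PosSemidef :=
    fun A hA => ptraceB_psd (cptp_psd hCPTP hA)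
  have hΦtr : ∀ A : Matrix n n ℂ, A.PosSemidef → (ptraceB (Λ A)).trace = A.trace :=
    fun A _ => by rw [ptraceB_trace, cptp_trace hCPTP]
  have hσ : (ptraceB (Λ ρ)).PosSemidef := hΦpos ρ hρ.1
  have hσ' : (ptraceB (Λ ρ')).PosSemidef := hΦpos ρ' hρ'.1
  have hWwcd : trNorm (ptraceB (Λ ρ) - ptraceB (Λ ρ')) ≤ wcd ρ ρ' := by
    apply le_csInf
    · obtain ⟨χ, hχr, hχu⟩ := exists_unit_inRange hρ
      obtain ⟨χ', hχr', hχu'⟩ := exists_unit_inRange hρ'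
      exact ⟨trNorm (pureProj χ - pureProj χ'), χ, χ', hχr, hχr', hχu, hχu', rfl⟩
    · rintro d ⟨χ, χ', hχr, hχr', hχu, hχu', rfl⟩
      have h1 : Λ (pureProj χ) = Λ ρ := purity hCPTP hρ hp hχr hχu
      have h2 : Λ (pureProj χ') = Λ ρ' := purity hCPTP hρ' hp' hχr' hχu'
      have hXh : (pureProj χ - pureProj χ').IsHermitian :=
        (pureProj_psd χ).isHermitian.sub (pureProj_psd χ').isHermitian
      have hcontr := trNorm_contract hXh (fun A => ptraceB (Λ A)) hΦsub hΦpos hΦtr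
      rw [hΦsub, h1, h2] at hcontr
      exact hcontr
  have hH1 : (ρ - ptraceB (Λ ρ)).IsHermitian := hρ.1.isHermitian.sub hσ.isHermitian
  have hH2 : (ptraceB (Λ ρ) - ptraceB (Λ ρ')).IsHermitian := hσ.isHermitian.sub hσ'.isHermitian
  have hH3 : (ptraceB (Λ ρ') - ρ').IsHermitian := hσ'.isHermitian.sub hρ'.1.isHermitian
  have htri1 : trNorm ((ρ - ptraceB (Λ ρ)) + (ptraceB (Λ ρ) - ptraceB (Λ ρ'))
        + (ptraceB (Λ ρ') - ρ'))
      ≤ trNorm (ρ - ptraceB (Λ ρ)) + trNorm (ptraceB (Λ ρ) - ptraceB (Λ ρ'))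
        + trNorm (ptraceB (Λ ρ') - ρ') := by
    calc trNorm (((ρ - ptraceB (Λ ρ)) + (ptraceB (Λ ρ) - ptraceB (Λ ρ')))
          + (ptraceB (Λ ρ') - ρ'))
        ≤ trNorm ((ρ - ptraceB (Λ ρ)) + (ptraceB (Λ ρ) - ptraceB (Λ ρ')))
          + trNorm (ptraceB (Λ ρ') - ρ') := trNorm_triangle (hH1.add hH2) hH3
      _ ≤ _ := by linarith [trNorm_triangle hH1 hH2]
  have hsum3 : (ρ - ptraceB (Λ ρ)) + (ptraceB (Λ ρ) - ptraceB (Λ ρ'))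
      + (ptraceB (Λ ρ') - ρ') = ρ - ρ' := by abel
  rw [hsum3] at htri1
  have hflip : trNorm (ptraceB (Λ ρ') - ρ') = trNorm (ρ' - ptraceB (Λ ρ')) := by
    rw [← trNorm_neg (ρ' - ptraceB (Λ ρ')), neg_sub]
  rw [hflip] at htri1
  have hB : 0 ≤ trNorm (ρ' - ptraceB (Λ ρ')) := trNorm_nonneg _
  have hkey : trNorm (ρ - ρ') - wcd ρ ρ'
      ≤ trNorm (ρ - ptraceB (Λ ρ)) + trNorm (ρ' - ptraceB (Λ ρ')) := by linarith
  calc η * (trNorm (ρ - ρ') - wcd ρ ρ')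
      ≤ η * (trNorm (ρ - ptraceB (Λ ρ)) + trNorm (ρ' - ptraceB (Λ ρ'))) :=
        mul_le_mul_of_nonneg_left hkey hη
    _ = η * trNorm (ρ - ptraceB (Λ ρ)) + η * trNorm (ρ' - ptraceB (Λ ρ')) := by ring
    _ ≤ η * trNorm (ρ - ptraceB (Λ ρ)) + η' * trNorm (ρ' - ptraceB (Λ ρ')) :=
        add_le_add_right (mul_le_mul_of_nonneg_right hle hB) _
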